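/- Let U = {(x, y) ∈ ℝ² : |y| < 1} be the open horizontal strip of height 2, and let r > 1 and δ > 0. Then there exists a set S ⊆ U that is closed and discrete as a subset of ℝ² (a locally finite set of points) with the following property. Suppose (p, q) : [0, 1] → ℝ² × ℝ² is a continuous path such that for every t ∈ [0, 1], ‖p(t) − q(t)‖ = r and the closed segment from p(t) to q(t) is contained in U \ S. If the initial segment is vertical, i.e., p(0) and q(0) have the same first coordinate c, then for every t ∈ [0, 1], every point z on the closed segment from p(t) to q(t) has first coordinate satisfying |z₁ − c| ≤ δ/2. (Any vertical segment of length r confined to U \ S must stay in the vertical strip of width δ centered on the segment.) -/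

import Mathlib

open Set

private lemma norm_sq_two (v : EuclideanSpace ℝ (Fin 2)) : ‖v‖^2 = (v 0)^2 + (v 1)^2 := by
  rw [EuclideanSpace.norm_eq, Real.sq_sqrt (by positivity)]
  simp [Fin.sum_univ_two, sq_abs]

private lemma param_mem (A B y : ℝ) (h1 : min A B ≤ y) (h2 : y ≤ max A B) (hne : A ≠ B) :
    (y - A)/(B - A) ∈ Set.Icc (0:ℝ) 1 ∧ A + (y - A)/(B - A) * (B - A) = y := by
  have hBA : B - A ≠ 0 := sub_ne_zero.2 (Ne.symm hne)
  constructor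
  · rcases lt_or_gt_of_ne hne with hAB | hAB
    · rw [min_eq_left hAB.le] at h1; rw [max_eq_right hAB.le] at h2
      constructor
      · apply div_nonneg <;> linarith
      · rw [div_le_one (by linarith)]; linarith
    · rw [min_eq_right hAB.le] at h1; rw [max_eq_left hAB.le] at h2
      rw [show (y - A)/(B - A) = (A - y)/(A - B) by
        rw [div_eq_div_iff hBA (by intro h; apply hBA; linarith)]; ring]
      constructor
      · apply div_nonneg <;> linarith
      · rw [div_le_one (by linarith)]; linarith
  · field_simp
    ring

private lemma coords_combo (a b : ℝ) (u v : EuclideanSpace ℝ (Fin 2)) (i : Fin 2) :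
    (a • u + b • v) i = a * u i + b * v i := by
  simp [PiLp.add_apply, PiLp.smul_apply, smul_eq_mul]

set_option maxHeartbeats 1600000 in
/-- In the open horizontal strip U of height 2, for any segment length r greater than
half the height and any δ > 0, one can remove a closed discrete set of points S from U so
that any moving segment of length r confined to U \ S that starts vertical (with first
coordinate c) stays in the vertical strip of width δ centered on the segment. -/
theorem vertical_segment_trapped_in_strip (r δ : ℝ) (hr : 1 < r) (hδ : 0 < δ) :
    ∃ S : Set (EuclideanSpace ℝ (Fin 2)),
      S ⊆ {z : EuclideanSpace ℝ (Fin 2) | |z 1| < 1} ∧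
      IsClosed S ∧ DiscreteTopology S ∧
      ∀ (p q : ℝ → EuclideanSpace ℝ (Fin 2)) (c : ℝ),
        ContinuousOn p (Set.Icc 0 1) → ContinuousOn q (Set.Icc 0 1) →
        (∀ t ∈ Set.Icc (0 : ℝ) 1, ‖p t - q t‖ = r ∧
          segment ℝ (p t) (q t) ⊆ {z : EuclideanSpace ℝ (Fin 2) | |z 1| < 1} \ S) →
        (p 0) 0 = c → (q 0) 0 = c →
        ∀ t ∈ Set.Icc (0 : ℝ) 1, ∀ z ∈ segment ℝ (p t) (q t), |z 0 - c| ≤ δ / 2 := by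
  -- opaque parameters
  obtain ⟨h, hh0, hh1, hhr, hhalf⟩ :
      ∃ h : ℝ, 0 < h ∧ h < 1 ∧ h ≤ (r-1)/2 ∧ h ≤ 1/2 :=
    ⟨min ((r-1)/2) (1/2), lt_min (by linarith) (by norm_num),
      lt_of_le_of_lt (min_le_right _ _) (by norm_num), min_le_left _ _, min_le_right _ _⟩
  have h1h : 1 + h < r := by nlinarith
  obtain ⟨m, hm0, hm2⟩ : ∃ m : ℝ, 0 < m ∧ m^2 = r^2 - (1+h)^2 :=
    ⟨Real.sqrt (r^2 - (1+h)^2), Real.sqrt_pos.2 (by nlinarith),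
      Real.sq_sqrt (by nlinarith)⟩
  obtain ⟨μ, hμ0, hμδ, hμm⟩ : ∃ μ : ℝ, 0 < μ ∧ μ ≤ δ/6 ∧ μ < m := by
    refine ⟨min δ m / 6, by positivity, ?_, ?_⟩
    · have := min_le_left δ m; linarith
    · have := min_le_right δ m; linarith
  obtain ⟨ε, hε, hεμ, hε_def⟩ : ∃ ε : ℝ, 0 < ε ∧ ε ≤ μ ∧ ε = h * μ :=
    ⟨h * μ, mul_pos hh0 hμ0, by nlinarith, rfl⟩
  -- the set S
  set S : Set (EuclideanSpace ℝ (Fin 2)) :=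
    {z | (z 1 = h ∨ z 1 = -h) ∧ ∃ k : ℤ, z 0 = k * ε} with hS_def
  have sep : ∀ z : EuclideanSpace ℝ (Fin 2), ∃ ρ > 0, ∀ w ∈ S, w ≠ z → ρ ≤ dist z w := by
    intro z
    have coordrw : ∀ w : EuclideanSpace ℝ (Fin 2), ∀ i, |z i - w i| ≤ dist z w := by
      intro w i
      rw [dist_eq_norm]
      have h1 : |(z - w) i| ≤ ‖z - w‖ := by
        rw [EuclideanSpace.norm_eq]
        rw [show |(z-w) i| = Real.sqrt (|(z-w) i|^2) by rw [Real.sqrt_sq_eq_abs, abs_abs]]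
        apply Real.sqrt_le_sqrt
        fin_cases i <;> simp [Fin.sum_univ_two] <;> positivity
      simpa [PiLp.sub_apply] using h1
    by_cases hy : z 1 = h ∨ z 1 = -h
    · set a := z 0 with ha
      set n : ℤ := ⌊a / ε⌋ with hn
      set d₀ : ℝ := if a = n * ε then ε else min (a - n * ε) ((n + 1) * ε - a) with hd₀
      have h1 : (n : ℝ) * ε ≤ a := by
        rw [hn]
        have := Int.floor_le (a / ε)
        calc (⌊a/ε⌋ : ℝ) * ε ≤ (a/ε) * ε := by nlinarith
          _ = a := by field_simp
      have h2 : a < ((n : ℝ) + 1) * ε := by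
        calc a = (a/ε) * ε := by field_simp
          _ < ((n:ℝ) + 1) * ε := by
              apply mul_lt_mul_of_pos_right _ hε
              rw [hn]; exact Int.lt_floor_add_one (a / ε)
      have hd₀pos : 0 < d₀ := by
        rw [hd₀]
        split_ifs with he
        · exact hε
        · rcases lt_of_le_of_ne h1 (by intro hc; exact he hc.symm) with h3
          apply lt_min <;> linarith
      have hgrid : ∀ k : ℤ, (k : ℝ) * ε ≠ a → d₀ ≤ |a - k * ε| := by
        intro k hk
        rw [hd₀]
        split_ifs with he
        · have hkn : k ≠ n := by intro hc; rw [hc] at hk; exact hk he.symm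
          have h1abs : (1 : ℝ) ≤ |(n : ℝ) - k| := by
            rw [show ((n:ℝ) - k) = ((n - k : ℤ) : ℝ) by push_cast; ring]
            rw [← Int.cast_abs]
            exact_mod_cast Int.one_le_abs (sub_ne_zero.2 (fun hc => hkn hc.symm))
          calc ε = 1 * ε := (one_mul ε).symm
            _ ≤ |(n:ℝ) - k| * ε := by nlinarith
            _ = |((n:ℝ) - k) * ε| := by rw [abs_mul, abs_of_pos hε]
            _ = |a - k * ε| := by rw [he]; ring_nf
        · rcases le_or_gt (k : ℝ) (n : ℝ) with hkn | hkn
          · have : (k : ℝ) * ε ≤ n * ε := by nlinarith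
            rw [abs_of_nonneg (by linarith : (0:ℝ) ≤ a - k*ε)]
            exact le_trans (min_le_left _ _) (by linarith)
          · have hkn' : (n : ℝ) + 1 ≤ k := by
              have h5 : n + 1 ≤ k := by exact_mod_cast hkn
              exact_mod_cast h5
            have : ((n : ℝ) + 1) * ε ≤ k * ε := by nlinarith
            rw [abs_sub_comm, abs_of_nonneg (by linarith : (0:ℝ) ≤ k * ε - a)]
            exact le_trans (min_le_right _ _) (by linarith)
      refine ⟨min d₀ (2 * h), by positivity, ?_⟩
      intro w hw hwz
      obtain ⟨hw1, k, hw0⟩ := hw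
      by_cases hsame : w 1 = z 1
      · have h0 : w 0 ≠ z 0 := by
          intro hc
          apply hwz
          ext i
          fin_cases i
          · exact hc
          · exact hsame
        have hne : (k : ℝ) * ε ≠ a := by rw [← hw0]; exact fun hc => h0 (hc.trans ha.symm)
        calc min d₀ (2*h) ≤ d₀ := min_le_left _ _
          _ ≤ |a - k * ε| := hgrid k hne
          _ = |z 0 - w 0| := by rw [hw0, ha]
          _ ≤ dist z w := coordrw w 0
      · have habs : |z 1 - w 1| = 2 * h := by
          rcases hy with hz1 | hz1 <;> rcases hw1 with hw1 | hw1
          · exact absurd (hw1.trans hz1.symm) hsame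
          · rw [hz1, hw1, show h - -h = 2*h by ring, abs_of_pos (by linarith)]
          · rw [hz1, hw1, show -h - h = -(2*h) by ring, abs_neg, abs_of_pos (by linarith)]
          · exact absurd (hw1.trans hz1.symm) hsame
        calc min d₀ (2*h) ≤ 2*h := min_le_right _ _
          _ = |z 1 - w 1| := habs.symm
          _ ≤ dist z w := coordrw w 1
    · push_neg at hy
      refine ⟨min |z 1 - h| |z 1 + h|, ?_, ?_⟩
      · apply lt_min
        · exact abs_pos.2 (sub_ne_zero.2 hy.1)
        · apply abs_pos.2
          intro hc
          exact hy.2 (by linarith)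
      · intro w hw hwz
        obtain ⟨hw1, -⟩ := hw
        rcases hw1 with hw1 | hw1
        · calc min |z 1 - h| |z 1 + h| ≤ |z 1 - h| := min_le_left _ _
            _ = |z 1 - w 1| := by rw [hw1]
            _ ≤ dist z w := coordrw w 1
        · calc min |z 1 - h| |z 1 + h| ≤ |z 1 + h| := min_le_right _ _
            _ = |z 1 - w 1| := by rw [hw1]; ring_nf
            _ ≤ dist z w := coordrw w 1
  have hSclosed : IsClosed S := by
    rw [← isOpen_compl_iff, Metric.isOpen_iff]
    intro z hz
    obtain ⟨ρ, hρ, hsep⟩ := sep z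
    refine ⟨ρ, hρ, fun w hw => ?_⟩
    intro hwS
    have := hsep w hwS (fun hc => hz (hc ▸ hwS))
    rw [Metric.mem_ball, dist_comm] at hw
    linarith
  have hSdisc : DiscreteTopology S := by
    rw [discreteTopology_subtype_iff]
    intro x hx
    rw [Filter.inf_principal_eq_bot]
    obtain ⟨ρ, hρ, hsep⟩ := sep x
    rw [Metric.mem_nhdsWithin_iff]
    refine ⟨ρ, hρ, fun w hw => ?_⟩
    obtain ⟨hwball, hwne⟩ := hw
    intro hwS
    have := hsep w hwS hwne
    rw [Metric.mem_ball, dist_comm] at hwball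
    linarith
  have hSsub : S ⊆ {z : EuclideanSpace ℝ (Fin 2) | |z 1| < 1} := by
    intro z hz
    obtain ⟨hz1, -⟩ := hz
    rcases hz1 with hz1 | hz1 <;> rw [Set.mem_setOf_eq, hz1]
    · rw [abs_of_pos hh0]; exact hh1
    · rw [abs_neg, abs_of_pos hh0]; exact hh1
  refine ⟨S, hSsub, hSclosed, hSdisc, ?_⟩
  intro p q c hp hq hseg hpc hqc
  -- coordinate functions are continuous
  have hpx : ContinuousOn (fun t => p t 0) (Set.Icc (0:ℝ) 1) :=
    (EuclideanSpace.proj (0 : Fin 2)).continuous.comp_continuousOn hp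
  have hpy : ContinuousOn (fun t => p t 1) (Set.Icc (0:ℝ) 1) :=
    (EuclideanSpace.proj (1 : Fin 2)).continuous.comp_continuousOn hp
  have hqx : ContinuousOn (fun t => q t 0) (Set.Icc (0:ℝ) 1) :=
    (EuclideanSpace.proj (0 : Fin 2)).continuous.comp_continuousOn hq
  have hqy : ContinuousOn (fun t => q t 1) (Set.Icc (0:ℝ) 1) :=
    (EuclideanSpace.proj (1 : Fin 2)).continuous.comp_continuousOn hq
  -- strip bounds at endpoints
  have hstrip : ∀ t ∈ Set.Icc (0:ℝ) 1, |p t 1| < 1 ∧ |q t 1| < 1 := by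
    intro t ht
    have h1 := (hseg t ht).2 (left_mem_segment ℝ (p t) (q t))
    have h2 := (hseg t ht).2 (right_mem_segment ℝ (p t) (q t))
    exact ⟨h1.1, h2.1⟩
  -- norm in coordinates
  have hnorm : ∀ t ∈ Set.Icc (0:ℝ) 1,
      (q t 0 - p t 0)^2 + (q t 1 - p t 1)^2 = r^2 := by
    intro t ht
    have h1 := (hseg t ht).1
    have h2 : ‖p t - q t‖^2 = r^2 := by rw [h1]
    rw [norm_sq_two] at h2
    have e0 : (p t - q t) 0 = p t 0 - q t 0 := by simp [PiLp.sub_apply]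
    have e1 : (p t - q t) 1 = p t 1 - q t 1 := by simp [PiLp.sub_apply]
    rw [e0, e1] at h2
    linear_combination h2
  -- segment points
  have hmemseg : ∀ t, ∀ s ∈ Set.Icc (0:ℝ) 1,
      ((1-s) • p t + s • q t) ∈ segment ℝ (p t) (q t) := by
    intro t s hs
    rw [segment_eq_image]
    exact ⟨s, hs, rfl⟩
  -- grid interval around c
  obtain ⟨k₀, aL, aR, haL, haRL, hcL, hcR⟩ :
      ∃ (k₀ : ℤ) (aL aR : ℝ), aL = (k₀:ℝ) * ε ∧ aR - aL = ε ∧ aL ≤ c ∧ c ≤ aR := by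
    refine ⟨⌊c / ε⌋, (⌊c / ε⌋ : ℝ) * ε, (⌊c / ε⌋ : ℝ) * ε + ε, rfl, by ring, ?_, ?_⟩
    · have := Int.floor_le (c / ε)
      calc (⌊c/ε⌋ : ℝ) * ε ≤ (c/ε) * ε := by nlinarith
        _ = c := by field_simp
    · have h2 : c < ((⌊c/ε⌋:ℝ) + 1) * ε := by
        calc c = (c/ε) * ε := by field_simp
          _ < ((⌊c/ε⌋:ℝ) + 1) * ε := by
              apply mul_lt_mul_of_pos_right _ hε
              exact Int.lt_floor_add_one (c / ε)
      linear_combination h2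
  have haR : aR = ((k₀ + 1 : ℤ) : ℝ) * ε := by push_cast; rw [haL] at haRL; linarith
  have hcIcc : c ∈ Set.Icc aL aR := ⟨hcL, hcR⟩
  -- the compact set of trapped configurations
  set K : Set (ℝ × ℝ × ℝ) := {x | x.1 ∈ Set.Icc (0:ℝ) 1 ∧ x.2.1 ∈ Set.Icc (0:ℝ) 1 ∧
    x.2.2 ∈ Set.Icc (0:ℝ) 1 ∧
    (1 - x.2.1) * (p x.1 1) + x.2.1 * (q x.1 1) = h ∧
    (1 - x.2.2) * (p x.1 1) + x.2.2 * (q x.1 1) = -h ∧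
    (1 - x.2.1) * (p x.1 0) + x.2.1 * (q x.1 0) ∈ Set.Icc aL aR ∧
    (1 - x.2.2) * (p x.1 0) + x.2.2 * (q x.1 0) ∈ Set.Icc aL aR} with hK_def
  set G : Set ℝ := Prod.fst '' K with hG_def
  -- G is closed
  have hGclosed : IsClosed G := by
    set box := Set.Icc (0:ℝ) 1 ×ˢ (Set.Icc (0:ℝ) 1 ×ˢ Set.Icc (0:ℝ) 1) with hbox_def
    have hbox : IsCompact box := isCompact_Icc.prod (isCompact_Icc.prod isCompact_Icc)
    have hmapsTo : ∀ x ∈ box, x.1 ∈ Set.Icc (0:ℝ) 1 := fun x hx => hx.1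
    have hcont : ∀ (f : ℝ → ℝ), ContinuousOn f (Set.Icc (0:ℝ) 1) →
        ContinuousOn (fun x : ℝ × ℝ × ℝ => f x.1) box := by
      intro f hf
      exact hf.comp continuousOn_fst hmapsTo
    have hc21 : ContinuousOn (fun x : ℝ × ℝ × ℝ => x.2.1) box :=
      (continuous_fst.comp continuous_snd).continuousOn
    have hc22 : ContinuousOn (fun x : ℝ × ℝ × ℝ => x.2.2) box :=
      (continuous_snd.comp continuous_snd).continuousOn
    have hΦ : ContinuousOn (fun x : ℝ × ℝ × ℝ =>
        (((1 - x.2.1) * (p x.1 1) + x.2.1 * (q x.1 1),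
          (1 - x.2.2) * (p x.1 1) + x.2.2 * (q x.1 1)),
         ((1 - x.2.1) * (p x.1 0) + x.2.1 * (q x.1 0),
          (1 - x.2.2) * (p x.1 0) + x.2.2 * (q x.1 0)))) box :=
      ((((continuousOn_const.sub hc21).mul (hcont _ hpy)).add
          (hc21.mul (hcont _ hqy))).prodMk
        (((continuousOn_const.sub hc22).mul (hcont _ hpy)).add
          (hc22.mul (hcont _ hqy)))).prodMk
      ((((continuousOn_const.sub hc21).mul (hcont _ hpx)).add
          (hc21.mul (hcont _ hqx))).prodMk
        (((continuousOn_const.sub hc22).mul (hcont _ hpx)).add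
          (hc22.mul (hcont _ hqx))))
    have hCcl : IsClosed ((({h} : Set ℝ) ×ˢ ({-h} : Set ℝ)) ×ˢ
        (Set.Icc aL aR ×ˢ Set.Icc aL aR)) :=
      ((isClosed_singleton.prod isClosed_singleton).prod
        (isClosed_Icc.prod isClosed_Icc))
    have hKeq : K = box ∩ (fun x : ℝ × ℝ × ℝ =>
        (((1 - x.2.1) * (p x.1 1) + x.2.1 * (q x.1 1),
          (1 - x.2.2) * (p x.1 1) + x.2.2 * (q x.1 1)),
         ((1 - x.2.1) * (p x.1 0) + x.2.1 * (q x.1 0),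
          (1 - x.2.2) * (p x.1 0) + x.2.2 * (q x.1 0)))) ⁻¹'
        ((({h} : Set ℝ) ×ˢ ({-h} : Set ℝ)) ×ˢ (Set.Icc aL aR ×ˢ Set.Icc aL aR)) := by
      ext x
      simp only [hK_def, Set.mem_setOf_eq, Set.mem_inter_iff, Set.mem_preimage,
        Set.mem_prod, Set.mem_singleton_iff, hbox_def]
      tauto
    have hKclosed : IsClosed K := by
      rw [hKeq]
      exact hΦ.preimage_isClosed_of_isClosed hbox.isClosed hCcl
    have hKcompact : IsCompact K :=
      hbox.of_isClosed_subset hKclosed (by rw [hKeq]; exact Set.inter_subset_left)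
    exact (hKcompact.image continuous_fst).isClosed
  -- facts derivable from membership in K
  have slopeFact : ∀ x : ℝ × ℝ × ℝ, x ∈ K →
      |q x.1 0 - p x.1 0| ≤ μ ∧ 1 + h < |q x.1 1 - p x.1 1| := by
    intro x hx
    obtain ⟨ht, hs1, hs2, hy1, hy2, hx1, hx2⟩ := hx
    obtain ⟨hp1, hq1⟩ := hstrip x.1 ht
    rw [abs_lt] at hp1 hq1
    have hyd : (x.2.1 - x.2.2) * (q x.1 1 - p x.1 1) = 2*h := by
      linear_combination hy1 - hy2
    have hxdiff : |((1 - x.2.1) * (p x.1 0) + x.2.1 * (q x.1 0)) -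
        ((1 - x.2.2) * (p x.1 0) + x.2.2 * (q x.1 0))| ≤ ε := by
      rw [abs_le]
      constructor
      · linarith [hx1.1, hx2.2, haRL]
      · linarith [hx1.2, hx2.1, haRL]
    have hDy2 : |q x.1 1 - p x.1 1| < 2 := by
      rw [abs_lt]
      constructor <;> linarith
    have hDxμ : |q x.1 0 - p x.1 0| ≤ μ := by
      have key : 2*h*(q x.1 0 - p x.1 0) =
          (((1 - x.2.1) * (p x.1 0) + x.2.1 * (q x.1 0)) -
           ((1 - x.2.2) * (p x.1 0) + x.2.2 * (q x.1 0))) * (q x.1 1 - p x.1 1) := by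
        linear_combination (-(q x.1 0 - p x.1 0)) * hyd
      have habs : 2*h*|q x.1 0 - p x.1 0| ≤ ε * 2 := by
        calc 2*h*|q x.1 0 - p x.1 0| = |2*h*(q x.1 0 - p x.1 0)| := by
              rw [abs_mul, abs_of_pos (by linarith : (0:ℝ) < 2*h)]
          _ = |((1 - x.2.1) * (p x.1 0) + x.2.1 * (q x.1 0)) -
              ((1 - x.2.2) * (p x.1 0) + x.2.2 * (q x.1 0))| * |q x.1 1 - p x.1 1| := by
              rw [key, abs_mul]
          _ ≤ ε * 2 := mul_le_mul hxdiff hDy2.le (abs_nonneg _) hε.le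
      by_contra hcon
      push_neg at hcon
      nlinarith [habs, mul_pos hh0 (sub_pos.2 hcon), hε_def]
    refine ⟨hDxμ, ?_⟩
    have hn := hnorm x.1 ht
    have hsq : (1+h)^2 < (q x.1 1 - p x.1 1)^2 := by
      have h1 : (q x.1 0 - p x.1 0)^2 ≤ μ^2 := by
        nlinarith [abs_nonneg (q x.1 0 - p x.1 0), sq_abs (q x.1 0 - p x.1 0), hDxμ, hμ0]
      nlinarith [hμm, hμ0, hm2, hn]
    by_contra hcon
    push_neg at hcon
    nlinarith [abs_nonneg (q x.1 1 - p x.1 1), sq_abs (q x.1 1 - p x.1 1), hh0]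
  -- min/max facts from steepness
  have minmax : ∀ t ∈ Set.Icc (0:ℝ) 1, 1 + h < |q t 1 - p t 1| →
      min (p t 1) (q t 1) < -h ∧ h < max (p t 1) (q t 1) := by
    intro t ht hsteep
    obtain ⟨hp1, hq1⟩ := hstrip t ht
    rw [abs_lt] at hp1 hq1
    rcases abs_cases (q t 1 - p t 1) with ⟨heq, -⟩ | ⟨heq, -⟩
    · rw [heq] at hsteep
      constructor
      · calc min (p t 1) (q t 1) ≤ p t 1 := min_le_left _ _
          _ < -h := by linarith
      · calc h < q t 1 := by linarith
          _ ≤ max (p t 1) (q t 1) := le_max_right _ _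
    · rw [heq] at hsteep
      constructor
      · calc min (p t 1) (q t 1) ≤ q t 1 := min_le_right _ _
          _ < -h := by linarith
      · calc h < p t 1 := by linarith
          _ ≤ max (p t 1) (q t 1) := le_max_left _ _
  -- starting point is in G
  have h0G : (0:ℝ) ∈ G := by
    have h0I : (0:ℝ) ∈ Set.Icc (0:ℝ) 1 := ⟨le_refl 0, zero_le_one⟩
    have hn := hnorm 0 h0I
    have hDx0 : q 0 0 - p 0 0 = 0 := by rw [hpc, hqc]; ring
    have hsq0 : (q 0 0 - p 0 0)^2 = 0 := by rw [hDx0]; ring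
    have hDy0 : 1 + h < |q 0 1 - p 0 1| := by
      by_contra hcon
      push_neg at hcon
      nlinarith [abs_nonneg (q 0 1 - p 0 1), sq_abs (q 0 1 - p 0 1), hh0, h1h, hr]
    obtain ⟨hmin, hmax⟩ := minmax 0 h0I hDy0
    have hne : p 0 1 ≠ q 0 1 := by
      intro hc
      rw [hc] at hmin hmax
      rw [min_self] at hmin
      rw [max_self] at hmax
      linarith
    obtain ⟨hs1, he1⟩ := param_mem (p 0 1) (q 0 1) h
      (le_trans hmin.le (by linarith)) (le_of_lt hmax) hne
    obtain ⟨hs2, he2⟩ := param_mem (p 0 1) (q 0 1) (-h)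
      (le_of_lt hmin) (le_trans (by linarith) hmax.le) hne
    have hxc : ∀ s : ℝ, (1 - s) * (p 0 0) + s * (q 0 0) = c := by
      intro s; rw [hpc, hqc]; ring
    refine ⟨(0, (h - p 0 1)/(q 0 1 - p 0 1), (-h - p 0 1)/(q 0 1 - p 0 1)),
      ⟨h0I, hs1, hs2, ?_, ?_, ?_, ?_⟩, rfl⟩
    · rw [show (1 - (h - p 0 1)/(q 0 1 - p 0 1)) * (p 0 1) +
        (h - p 0 1)/(q 0 1 - p 0 1) * (q 0 1)
        = p 0 1 + (h - p 0 1)/(q 0 1 - p 0 1) * (q 0 1 - p 0 1) by ring]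
      exact he1
    · rw [show (1 - (-h - p 0 1)/(q 0 1 - p 0 1)) * (p 0 1) +
        (-h - p 0 1)/(q 0 1 - p 0 1) * (q 0 1)
        = p 0 1 + (-h - p 0 1)/(q 0 1 - p 0 1) * (q 0 1 - p 0 1) by ring]
      exact he2
    · rw [hxc]; exact hcIcc
    · rw [hxc]; exact hcIcc
  -- relative openness of G
  have hGopen : ∀ t ∈ Set.Icc (0:ℝ) 1, t ∈ G →
      ∀ᶠ t' in nhdsWithin t (Set.Icc (0:ℝ) 1), t' ∈ G := by
    intro t ht htG
    obtain ⟨x, hxK, hxt⟩ := htG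
    obtain ⟨hDxμ, hsteep⟩ := slopeFact x hxK
    rw [hxt] at hDxμ hsteep
    obtain ⟨htI, hs1I, hs2I, hy1, hy2, hx1, hx2⟩ := hxK
    rw [hxt] at hy1 hy2 hx1 hx2
    have hDyne : q t 1 - p t 1 ≠ 0 := by
      intro hc; rw [hc, abs_zero] at hsteep; linarith
    obtain ⟨hmin, hmax⟩ := minmax t ht hsteep
    have huniq : ∀ y₀ s : ℝ, (1 - s) * (p t 1) + s * (q t 1) = y₀ →
        s = (y₀ - p t 1) / (q t 1 - p t 1) := by
      intro y₀ s hs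
      field_simp
      linear_combination hs
    have hs1u : x.2.1 = (h - p t 1) / (q t 1 - p t 1) := huniq h x.2.1 hy1
    have hs2u : x.2.2 = (-h - p t 1) / (q t 1 - p t 1) := huniq (-h) x.2.2 hy2
    have hXmem : ∀ y₀ s : ℝ, s ∈ Set.Icc (0:ℝ) 1 →
        (1 - s) * (p t 1) + s * (q t 1) = y₀ → (y₀ = h ∨ y₀ = -h) →
        (1 - s) * (p t 0) + s * (q t 0) ∈ Set.Icc aL aR →
        (1 - s) * (p t 0) + s * (q t 0) ∈ Set.Ioo aL aR := by
      intro y₀ s hsI hys hy₀ hxs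
      have hzseg := (hseg t ht).2 (hmemseg t s hsI)
      have hz0 : ((1-s) • p t + s • q t) 0 = (1 - s) * (p t 0) + s * (q t 0) :=
        coords_combo _ _ _ _ 0
      have hz1 : ((1-s) • p t + s • q t) 1 = (1 - s) * (p t 1) + s * (q t 1) :=
        coords_combo _ _ _ _ 1
      have hznS : ((1-s) • p t + s • q t) ∉ S := hzseg.2
      constructor
      · rcases lt_or_eq_of_le hxs.1 with hlt | heq
        · exact hlt
        · exfalso
          apply hznS
          rw [hS_def]
          refine ⟨?_, ⟨k₀, ?_⟩⟩
          · rw [hz1, hys]; tauto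
          · rw [hz0, ← heq, haL]
      · rcases lt_or_eq_of_le hxs.2 with hlt | heq
        · exact hlt
        · exfalso
          apply hznS
          rw [hS_def]
          refine ⟨?_, ⟨k₀ + 1, ?_⟩⟩
          · rw [hz1, hys]; tauto
          · rw [hz0, heq, haR]
    have hX1 : (1 - x.2.1) * (p t 0) + x.2.1 * (q t 0) ∈ Set.Ioo aL aR :=
      hXmem h x.2.1 hs1I hy1 (Or.inl rfl) hx1
    have hX2 : (1 - x.2.2) * (p t 0) + x.2.2 * (q t 0) ∈ Set.Ioo aL aR :=
      hXmem (-h) x.2.2 hs2I hy2 (Or.inr rfl) hx2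
    have cpy : ContinuousWithinAt (fun t' => p t' 1) (Set.Icc (0:ℝ) 1) t := hpy t ht
    have cqy : ContinuousWithinAt (fun t' => q t' 1) (Set.Icc (0:ℝ) 1) t := hqy t ht
    have cpx : ContinuousWithinAt (fun t' => p t' 0) (Set.Icc (0:ℝ) 1) t := hpx t ht
    have cqx : ContinuousWithinAt (fun t' => q t' 0) (Set.Icc (0:ℝ) 1) t := hqx t ht
    have cX : ∀ y₀ : ℝ, ContinuousWithinAt (fun t' =>
        (1 - (y₀ - p t' 1) / (q t' 1 - p t' 1)) * (p t' 0) +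
        (y₀ - p t' 1) / (q t' 1 - p t' 1) * (q t' 0)) (Set.Icc (0:ℝ) 1) t := by
      intro y₀
      have cdiv : ContinuousWithinAt (fun t' => (y₀ - p t' 1) / (q t' 1 - p t' 1))
          (Set.Icc (0:ℝ) 1) t :=
        (continuousWithinAt_const.sub cpy).div (cqy.sub cpy) hDyne
      exact ((continuousWithinAt_const.sub cdiv).mul cpx).add (cdiv.mul cqx)
    have hE1 : ∀ᶠ t' in nhdsWithin t (Set.Icc (0:ℝ) 1),
        min (p t' 1) (q t' 1) < -h :=
      Filter.Tendsto.eventually_lt_const hmin (cpy.min cqy)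
    have hE2 : ∀ᶠ t' in nhdsWithin t (Set.Icc (0:ℝ) 1),
        h < max (p t' 1) (q t' 1) :=
      Filter.Tendsto.eventually_const_lt hmax (cpy.max cqy)
    have hE3 : ∀ᶠ t' in nhdsWithin t (Set.Icc (0:ℝ) 1),
        (1 - (h - p t' 1) / (q t' 1 - p t' 1)) * (p t' 0) +
        (h - p t' 1) / (q t' 1 - p t' 1) * (q t' 0) ∈ Set.Ioo aL aR := by
      apply (cX h).eventually (isOpen_Ioo.eventually_mem ?_)
      show (1 - (h - p t 1) / (q t 1 - p t 1)) * (p t 0) +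
        (h - p t 1) / (q t 1 - p t 1) * (q t 0) ∈ Set.Ioo aL aR
      rw [← hs1u]
      exact hX1
    have hE4 : ∀ᶠ t' in nhdsWithin t (Set.Icc (0:ℝ) 1),
        (1 - (-h - p t' 1) / (q t' 1 - p t' 1)) * (p t' 0) +
        (-h - p t' 1) / (q t' 1 - p t' 1) * (q t' 0) ∈ Set.Ioo aL aR := by
      apply (cX (-h)).eventually (isOpen_Ioo.eventually_mem ?_)
      show (1 - (-h - p t 1) / (q t 1 - p t 1)) * (p t 0) +
        (-h - p t 1) / (q t 1 - p t 1) * (q t 0) ∈ Set.Ioo aL aR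
      rw [← hs2u]
      exact hX2
    have hE5 : ∀ᶠ t' in nhdsWithin t (Set.Icc (0:ℝ) 1), t' ∈ Set.Icc (0:ℝ) 1 :=
      eventually_mem_nhdsWithin
    filter_upwards [hE1, hE2, hE3, hE4, hE5] with t' he1 he2 he3 he4 he5
    have hne' : p t' 1 ≠ q t' 1 := by
      intro hc
      rw [hc] at he1 he2
      rw [min_self] at he1
      rw [max_self] at he2
      linarith
    obtain ⟨hs1', hp1'⟩ := param_mem (p t' 1) (q t' 1) h
      (le_trans he1.le (by linarith)) he2.le hne'
    obtain ⟨hs2', hp2'⟩ := param_mem (p t' 1) (q t' 1) (-h)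
      he1.le (le_trans (by linarith) he2.le) hne'
    refine ⟨(t', (h - p t' 1)/(q t' 1 - p t' 1), (-h - p t' 1)/(q t' 1 - p t' 1)),
      ⟨he5, hs1', hs2', ?_, ?_, Set.Ioo_subset_Icc_self he3, Set.Ioo_subset_Icc_self he4⟩,
      rfl⟩
    · rw [show (1 - (h - p t' 1)/(q t' 1 - p t' 1)) * (p t' 1) +
        (h - p t' 1)/(q t' 1 - p t' 1) * (q t' 1)
        = p t' 1 + (h - p t' 1)/(q t' 1 - p t' 1) * (q t' 1 - p t' 1) by ring]
      exact hp1'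
    · rw [show (1 - (-h - p t' 1)/(q t' 1 - p t' 1)) * (p t' 1) +
        (-h - p t' 1)/(q t' 1 - p t' 1) * (q t' 1)
        = p t' 1 + (-h - p t' 1)/(q t' 1 - p t' 1) * (q t' 1 - p t' 1) by ring]
      exact hp2'
  -- continuous induction: Icc 0 1 ⊆ G
  have hsub : Set.Icc (0:ℝ) 1 ⊆ G := by
    by_contra hcon
    rw [Set.not_subset] at hcon
    obtain ⟨t₀, ht₀I, ht₀G⟩ := hcon
    set B : Set ℝ := {t | t ∈ Set.Icc (0:ℝ) 1 ∧ t ∉ G} with hB_def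
    have hBne : B.Nonempty := ⟨t₀, ht₀I, ht₀G⟩
    have hBbdd : BddBelow B := ⟨0, fun b hb => hb.1.1⟩
    set T : ℝ := sInf B with hT_def
    have hT0 : 0 ≤ T := le_csInf hBne (fun b hb => hb.1.1)
    have hT1 : T ≤ 1 := le_trans (csInf_le hBbdd ⟨ht₀I, ht₀G⟩) ht₀I.2
    have hTI : T ∈ Set.Icc (0:ℝ) 1 := ⟨hT0, hT1⟩
    have hbelow : ∀ s, 0 ≤ s → s < T → s ∈ G := by
      intro s hs0 hsT
      by_contra hsG
      have hsB : s ∈ B := ⟨⟨hs0, le_trans hsT.le hT1⟩, hsG⟩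
      have := csInf_le hBbdd hsB
      linarith
    by_cases hTG : T ∈ G
    · have hev := hGopen T hTI hTG
      rw [Filter.eventually_iff, Metric.mem_nhdsWithin_iff] at hev
      obtain ⟨η, hη, hball⟩ := hev
      have hTη : T + η ≤ T := by
        apply le_csInf hBne
        intro b hb
        by_contra hbc
        push_neg at hbc
        have hbT : T ≤ b := csInf_le hBbdd hb
        have hbm : b ∈ Metric.ball T η ∩ Set.Icc 0 1 := by
          constructor
          · rw [Metric.mem_ball, Real.dist_eq, abs_of_nonneg (by linarith)]
            linarith
          · exact hb.1
        exact hb.2 (hball hbm)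
      linarith
    · have hTpos : 0 < T := by
        rcases lt_or_eq_of_le hT0 with hlt | heq
        · exact hlt
        · exfalso; rw [← heq] at hTG; exact hTG h0G
      have hTcl : T ∈ closure G := by
        rw [Metric.mem_closure_iff]
        intro η hη
        refine ⟨T - min T η / 2, ?_, ?_⟩
        · apply hbelow
          · have := min_le_left T η; linarith
          · have := lt_min hTpos hη; linarith
        · rw [Real.dist_eq]
          have h1 := min_le_right T η
          have h2 := lt_min hTpos hη
          rw [abs_of_nonneg (by linarith)]
          linarith
      rw [hGclosed.closure_eq] at hTcl
      exact hTG hTcl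
  -- conclusion
  intro t ht z hz
  have htG : t ∈ G := hsub ht
  obtain ⟨x, hxK, hxt⟩ := htG
  obtain ⟨hDxμ, -⟩ := slopeFact x hxK
  rw [hxt] at hDxμ
  obtain ⟨-, hs1I, -, -, -, hx1, -⟩ := hxK
  rw [hxt] at hx1
  rw [segment_eq_image] at hz
  obtain ⟨s, hsI, rfl⟩ := hz
  have hz0 : ((1-s) • p t + s • q t) 0 = (1 - s) * (p t 0) + s * (q t 0) :=
    coords_combo _ _ _ _ 0
  show |((1-s) • p t + s • q t) 0 - c| ≤ δ / 2
  rw [hz0]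
  have hdiff : (1 - s) * (p t 0) + s * (q t 0) -
      ((1 - x.2.1) * (p t 0) + x.2.1 * (q t 0)) = (s - x.2.1) * (q t 0 - p t 0) := by
    ring
  have hss : |s - x.2.1| ≤ 1 := by
    rw [abs_le]
    exact ⟨by linarith [hsI.1, hsI.2, hs1I.1, hs1I.2],
      by linarith [hsI.1, hsI.2, hs1I.1, hs1I.2]⟩
  have hb1 : |(1 - s) * (p t 0) + s * (q t 0) -
      ((1 - x.2.1) * (p t 0) + x.2.1 * (q t 0))| ≤ μ := by
    rw [hdiff, abs_mul]
    calc |s - x.2.1| * |q t 0 - p t 0| ≤ 1 * μ :=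
        mul_le_mul hss hDxμ (abs_nonneg _) zero_le_one
      _ = μ := one_mul μ
  have hb2 : |(1 - x.2.1) * (p t 0) + x.2.1 * (q t 0) - c| ≤ ε := by
    rw [abs_le]
    exact ⟨by linarith [hx1.1, hcIcc.2, haRL], by linarith [hx1.2, hcIcc.1, haRL]⟩
  calc |(1 - s) * (p t 0) + s * (q t 0) - c|
      ≤ |(1 - s) * (p t 0) + s * (q t 0) -
          ((1 - x.2.1) * (p t 0) + x.2.1 * (q t 0))| +
        |(1 - x.2.1) * (p t 0) + x.2.1 * (q t 0) - c| := abs_sub_le _ _ _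
    _ ≤ μ + ε := add_le_add hb1 hb2
    _ ≤ δ/6 + δ/6 := add_le_add hμδ (le_trans hεμ hμδ)
    _ ≤ δ/2 := by linarith
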